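/- Assume (H): $H,G\in C^2([0,\infty))$ with $H(0)=G(0)=0$, $H'>0$ and $G'>0$ on $[0,\infty)$, $H''<0$ and $G''<0$ on $(0,\infty)$, and $G(H(\hat z)/a)<b\hat z$ for some $\hat z>0$, where $a,b>0$. If $H'(0)G'(0)>ab$, then the system $au=H(v)$, $bv=G(u)$ has exactly one root $(u^*,v^*)$ with $u^*>0$ and $v^*>0$. -/

import Mathlib

open Set Topology Filter

/-- Under hypothesis (H) and `H'(0)G'(0) > ab`, the system `au = H(v)`,
`bv = G(u)` has exactly one positive root `(u*, v*)`. -/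
theorem stmt4 (a b : ℝ) (ha : 0 < a) (hb : 0 < b) (H G : ℝ → ℝ)
    (hHreg : ContDiffOn ℝ 2 H (Set.Ici 0)) (hGreg : ContDiffOn ℝ 2 G (Set.Ici 0))
    (hH0 : H 0 = 0) (hG0 : G 0 = 0)
    (hH' : ∀ z : ℝ, 0 ≤ z → 0 < deriv H z) (hG' : ∀ z : ℝ, 0 ≤ z → 0 < deriv G z)
    (hH'' : ∀ z : ℝ, 0 < z → deriv (deriv H) z < 0)
    (hG'' : ∀ z : ℝ, 0 < z → deriv (deriv G) z < 0)
    (hhat : ∃ zhat : ℝ, 0 < zhat ∧ G (H zhat / a) < b * zhat)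
    (hR0 : a * b < deriv H 0 * deriv G 0) :
    ∃! p : ℝ × ℝ, 0 < p.1 ∧ 0 < p.2 ∧ a * p.1 = H p.2 ∧ b * p.2 = G p.1 := by
  obtain ⟨zhat, hzhat, hfz⟩ := hhat
  -- basic regularity
  have hHc : ContinuousOn H (Ici 0) := hHreg.continuousOn
  have hGc : ContinuousOn G (Ici 0) := hGreg.continuousOn
  have hHd : ∀ z : ℝ, 0 ≤ z → DifferentiableAt ℝ H z := by
    intro z hz
    by_contra h
    exact absurd (deriv_zero_of_not_differentiableAt h) (by linarith [hH' z hz])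
  have hGd : ∀ z : ℝ, 0 ≤ z → DifferentiableAt ℝ G z := by
    intro z hz
    by_contra h
    exact absurd (deriv_zero_of_not_differentiableAt h) (by linarith [hG' z hz])
  -- strict monotonicity
  have hHmono : StrictMonoOn H (Ici 0) := by
    apply strictMonoOn_of_deriv_pos (convex_Ici 0) hHc
    intro x hx
    rw [interior_Ici] at hx
    exact hH' x hx.le
  have hGmono : StrictMonoOn G (Ici 0) := by
    apply strictMonoOn_of_deriv_pos (convex_Ici 0) hGc
    intro x hx
    rw [interior_Ici] at hx
    exact hG' x hx.le
  -- strict concavity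
  have hHconc : StrictConcaveOn ℝ (Ici 0) H := by
    apply strictConcaveOn_of_deriv2_neg (convex_Ici 0) hHc
    intro x hx
    rw [interior_Ici] at hx
    exact hH'' x hx
  have hGconc : StrictConcaveOn ℝ (Ici 0) G := by
    apply strictConcaveOn_of_deriv2_neg (convex_Ici 0) hGc
    intro x hx
    rw [interior_Ici] at hx
    exact hG'' x hx
  have hHpos : ∀ z : ℝ, 0 < z → 0 < H z := by
    intro z hz
    have := hHmono (Set.mem_Ici.2 (le_refl 0)) (Set.mem_Ici.2 hz.le) hz
    rwa [hH0] at this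
  -- superlinearity from concavity with value 0 at 0
  have hsuper : ∀ (F : ℝ → ℝ), StrictConcaveOn ℝ (Ici 0) F → F 0 = 0 →
      ∀ t x : ℝ, 0 < t → t < 1 → 0 < x → t * F x < F (t * x) := by
    intro F hF hF0 t x ht ht1 hx
    have h := hF.2 (Set.mem_Ici.2 hx.le) (Set.mem_Ici.2 (le_refl 0)) hx.ne' ht
      (show (0:ℝ) < 1 - t by linarith) (by ring)
    simpa [hF0, smul_eq_mul] using h
  -- the scalar function f
  set f : ℝ → ℝ := fun z => G (H z / a) - b * z with hf_def
  have hf0 : f 0 = 0 := by simp [hf_def, hH0, hG0]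
  have hfcont : ContinuousOn f (Ici 0) := by
    apply ContinuousOn.sub _ (by fun_prop)
    apply hGc.comp ((hHc.div_const a))
    intro z hz
    have : 0 ≤ H z := by
      rcases eq_or_lt_of_le (Set.mem_Ici.1 hz) with h | h
      · simp [← h, hH0]
      · exact (hHpos z h).le
    exact div_nonneg this ha.le
  -- derivative of f at 0 is positive
  have hderiv : HasDerivAt f (deriv G 0 * (deriv H 0 / a) - b) 0 := by
    have h1 : HasDerivAt (fun z => H z / a) (deriv H 0 / a) 0 :=
      ((hHd 0 le_rfl).hasDerivAt).div_const a
    have h2 : HasDerivAt G (deriv G 0) (H 0 / a) := by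
      rw [hH0]; simpa using (hGd 0 le_rfl).hasDerivAt
    have := (h2.comp 0 h1).sub ((hasDerivAt_id (0:ℝ)).const_mul b)
    exact this.congr_deriv (by ring)
  have hderiv_pos : 0 < deriv G 0 * (deriv H 0 / a) - b := by
    rw [sub_pos, mul_div_assoc', lt_div_iff₀ ha]
    nlinarith
  -- f is positive somewhere near 0
  have hexists_pos : ∃ z0 : ℝ, 0 < z0 ∧ z0 < zhat ∧ 0 < f z0 := by
    have hslope := hasDerivAt_iff_tendsto_slope.1 hderiv
    have h1 : ∀ᶠ z in 𝓝[≠] (0:ℝ), 0 < slope f 0 z :=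
      hslope (Ioi_mem_nhds hderiv_pos)
    have h2 : ∀ᶠ z in 𝓝[>] (0:ℝ), 0 < slope f 0 z :=
      h1.filter_mono (nhdsWithin_mono 0 fun z hz => ne_of_gt hz)
    have h3 : Ioo (0:ℝ) zhat ∈ 𝓝[>] (0:ℝ) := Ioo_mem_nhdsGT_of_mem ⟨le_rfl, hzhat⟩
    obtain ⟨z0, hz0s, hz0m⟩ := (h2.and (eventually_of_mem h3 fun z hz => hz)).exists
    refine ⟨z0, hz0m.1, hz0m.2, ?_⟩
    have : slope f 0 z0 = f z0 / z0 := by simp [slope_def_field, hf0]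
    rw [this] at hz0s
    exact (div_pos_iff.1 hz0s).resolve_right (fun h => absurd hz0m.1 (not_lt.2 h.2.le)) |>.1
  obtain ⟨z0, hz0pos, hz0lt, hfz0⟩ := hexists_pos
  -- intermediate value: a zero of f in (z0, zhat)
  have hzstar : ∃ zs : ℝ, z0 < zs ∧ zs < zhat ∧ f zs = 0 := by
    have hsub : Icc z0 zhat ⊆ Ici 0 := fun x hx => le_trans hz0pos.le hx.1
    have hc : ContinuousOn f (Icc z0 zhat) := hfcont.mono hsub
    have h0mem : (0:ℝ) ∈ Ioo (f zhat) (f z0) := ⟨by simp [hf_def]; linarith, hfz0⟩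
    obtain ⟨zs, hzs, hfzs⟩ := intermediate_value_Ioo' (le_of_lt hz0lt) hc h0mem
    exact ⟨zs, hzs.1, hzs.2, hfzs⟩
  obtain ⟨zs, hzs0, hzshat, hfzs⟩ := hzstar
  have hzspos : 0 < zs := lt_trans hz0pos hzs0
  -- uniqueness of positive zeros of f
  have huniq : ∀ z1 z2 : ℝ, 0 < z1 → 0 < z2 → f z1 = 0 → f z2 = 0 → z1 = z2 := by
    have key : ∀ z1 z2 : ℝ, 0 < z1 → 0 < z2 → z1 < z2 → f z1 = 0 → f z2 = 0 → False := by
      intro z1 z2 h1 h2 h12 hf1 hf2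
      set t := z1 / z2 with ht_def
      have ht : 0 < t := div_pos h1 h2
      have ht1 : t < 1 := (div_lt_one h2).2 h12
      have htz : t * z2 = z1 := div_mul_cancel₀ z1 h2.ne'
      have hH2pos : 0 < H z2 := hHpos z2 h2
      have step1 : t * H z2 < H z1 := by
        have := hsuper H hHconc hH0 t z2 ht ht1 h2
        rwa [htz] at this
      have step2 : G (t * (H z2 / a)) < G (H z1 / a) := by
        apply hGmono (mul_nonneg ht.le (div_nonneg hH2pos.le ha.le))
          (div_nonneg (hHpos z1 h1).le ha.le)
        rw [mul_div_assoc']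
        exact (div_lt_div_iff_of_pos_right ha).2 step1
      have step3 : t * G (H z2 / a) < G (t * (H z2 / a)) :=
        hsuper G hGconc hG0 t (H z2 / a) ht ht1 (div_pos hH2pos ha)
      have e1 : G (H z1 / a) = b * z1 := by
        have := hf1; simp only [hf_def, sub_eq_zero] at this; exact this
      have e2 : G (H z2 / a) = b * z2 := by
        have := hf2; simp only [hf_def, sub_eq_zero] at this; exact this
      nlinarith
    intro z1 z2 h1 h2 hf1 hf2
    rcases lt_trichotomy z1 z2 with h | h | h
    · exact absurd (key z1 z2 h1 h2 h hf1 hf2) (fun x => x)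
    · exact h
    · exact absurd (key z2 z1 h2 h1 h hf2 hf1) (fun x => x)
  -- assemble
  refine ⟨(H zs / a, zs), ⟨div_pos (hHpos zs hzspos) ha, hzspos, ?_, ?_⟩, ?_⟩
  · field_simp
  · simp only [hf_def, sub_eq_zero] at hfzs
    linarith [hfzs]
  · rintro ⟨u, v⟩ ⟨hu, hv, huv1, huv2⟩
    have hueq : u = H v / a := by field_simp at huv1 ⊢; linarith
    have hfv : f v = 0 := by
      simp only [hf_def]
      rw [← hueq, ← huv2]; ring
    have := huniq v zs hv hzspos hfv hfzs
    simp [Prod.ext_iff, this, hueq]
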